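/- Let G and H be finite simple graphs both having at least two vertices, and suppose G has diameter at least 2 (i.e., there exist two vertices at distance at least 2 in G) and H has at least one edge. Then the Δ-convex hull (in the strong product G ⊠ H) of the two vertices (g₁,h₁) and (g₁,h₂), where h₁h₂ is an edge of H and g₁ any vertex of G with G connected, equals all of V(G ⊠ H). -/

import Mathlib

variable {V : Type*}

/-- `S` is Δ-convex: no vertex outside `S` is adjacent to two adjacent vertices of `S`. -/
def DeltaConvex (G : SimpleGraph V) (S : Set V) : Prop :=
  ∀ ⦃w u v : V⦄, u ∈ S → v ∈ S → G.Adj u v → G.Adj w u → G.Adj w v → w ∈ S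

/-- The Δ-convex hull of `S`: the smallest Δ-convex set containing `S`. -/
def deltaHull (G : SimpleGraph V) (S : Set V) : Set V :=
  ⋂₀ {T : Set V | S ⊆ T ∧ DeltaConvex G T}

/-- The strong product of two simple graphs. -/
def strongProd {α β : Type*} (G : SimpleGraph α) (H : SimpleGraph β) :
    SimpleGraph (α × β) where
  Adj x y := (x.1 = y.1 ∧ H.Adj x.2 y.2) ∨ (G.Adj x.1 y.1 ∧ x.2 = y.2) ∨
    (G.Adj x.1 y.1 ∧ H.Adj x.2 y.2)
  symm := by
    constructor
    rintro ⟨a, b⟩ ⟨c, d⟩ (⟨h1, h2⟩ | ⟨h1, h2⟩ | ⟨h1, h2⟩)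
    · exact Or.inl ⟨h1.symm, h2.symm⟩
    · exact Or.inr (Or.inl ⟨h1.symm, h2.symm⟩)
    · exact Or.inr (Or.inr ⟨h1.symm, h2.symm⟩)
  loopless := by
    constructor
    rintro ⟨a, b⟩ (⟨h1, h2⟩ | ⟨h1, h2⟩ | ⟨h1, h2⟩)
    · exact H.loopless.irrefl b h2
    · exact G.loopless.irrefl a h1
    · exact G.loopless.irrefl a h1

lemma subset_deltaHull (G : SimpleGraph V) (S : Set V) : S ⊆ deltaHull G S := by
  intro x hx T hT
  exact hT.1 hx

lemma deltaHull_convex (G : SimpleGraph V) (S : Set V) : DeltaConvex G (deltaHull G S) := by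
  intro w u v hu hv huv hwu hwv T hT
  exact hT.2 (hu T hT) (hv T hT) huv hwu hwv

lemma walk_ind {α : Type*} (G : SimpleGraph α) (P : α → Prop)
    (step : ∀ u v, G.Adj u v → P u → P v) :
    ∀ {a b : α}, G.Walk a b → P a → P b := by
  intro a b w
  induction w with
  | nil => exact id
  | cons h p ih => exact fun pa => ih (step _ _ h pa)

lemma exists_adj' {α : Type*} [Fintype α] (G : SimpleGraph α) (hconn : G.Connected)
    (hcard : 2 ≤ Fintype.card α) (g : α) : ∃ g', G.Adj g g' := by
  obtain ⟨g'', hne⟩ := Fintype.exists_ne_of_one_lt_card (by omega) g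
  obtain ⟨w⟩ := hconn.preconnected g g''
  cases w with
  | nil => exact absurd rfl hne
  | cons h p => exact ⟨_, h⟩

theorem stmt_19 {α β : Type*} [Fintype α] [Fintype β]
    (G : SimpleGraph α) (H : SimpleGraph β)
    (hGcard : 2 ≤ Fintype.card α) (hHcard : 2 ≤ Fintype.card β)
    (hGconn : G.Connected) (hHconn : H.Connected)
    (hdiam : ∃ x y : α, 2 ≤ G.dist x y)
    (g₁ : α) (h₁ h₂ : β) (hh : H.Adj h₁ h₂) :
    deltaHull (strongProd G H) {(g₁, h₁), (g₁, h₂)} = Set.univ := by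
  set S := deltaHull (strongProd G H) {(g₁, h₁), (g₁, h₂)} with hS
  have hsub : ({(g₁, h₁), (g₁, h₂)} : Set (α × β)) ⊆ S := subset_deltaHull _ _
  have hconv : DeltaConvex (strongProd G H) S := deltaHull_convex _ _
  have base1 : (g₁, h₁) ∈ S := hsub (by simp)
  have base2 : (g₁, h₂) ∈ S := hsub (by simp)
  have layer : ∀ g, (g, h₁) ∈ S ∧ (g, h₂) ∈ S := by
    intro g
    obtain ⟨w⟩ := hGconn.preconnected g₁ g
    refine walk_ind G (fun g => (g, h₁) ∈ S ∧ (g, h₂) ∈ S) ?_ w ⟨base1, base2⟩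
    rintro u v huv ⟨hu1, hu2⟩
    have adj12 : (strongProd G H).Adj (u, h₁) (u, h₂) := Or.inl ⟨rfl, hh⟩
    have hv1 : (v, h₁) ∈ S :=
      hconv hu1 hu2 adj12 (Or.inr (Or.inl ⟨huv.symm, rfl⟩)) (Or.inr (Or.inr ⟨huv.symm, hh⟩))
    have hv2 : (v, h₂) ∈ S :=
      hconv hu1 hu2 adj12 (Or.inr (Or.inr ⟨huv.symm, hh.symm⟩)) (Or.inr (Or.inl ⟨huv.symm, rfl⟩))
    exact ⟨hv1, hv2⟩
  have all : ∀ h g, (g, h) ∈ S := by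
    intro h
    obtain ⟨w⟩ := hHconn.preconnected h₂ h
    refine walk_ind H (fun h => ∀ g, (g, h) ∈ S) ?_ w (fun g => (layer g).2) 
    intro a b hab ih g
    obtain ⟨g', hgg'⟩ := exists_adj' G hGconn hGcard g
    exact hconv (ih g) (ih g') (Or.inr (Or.inl ⟨hgg', rfl⟩))
      (Or.inl ⟨rfl, hab.symm⟩) (Or.inr (Or.inr ⟨hgg', hab.symm⟩))
  ext ⟨g, h⟩
  simp [all h g]
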